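/- In the Heisenberg group ℂ × ℝ with law (ζ,v) ∗ (ξ,t) = (ζ+ξ, v+t+2Im(ζ·conj(ξ))), the function ν(p,q) = |p⁻¹ ∗ q|, where |(ζ,v)| = ||ζ|² − i·v|^{1/2}, defines a metric (the Cygan metric): ν is symmetric, nonnegative, vanishes exactly on the diagonal, and satisfies the triangle inequality. -/

import Mathlib

/-- The Heisenberg group law on `ℂ × ℝ`. -/
def heisMul (p q : ℂ × ℝ) : ℂ × ℝ :=
  (p.1 + q.1, p.2 + q.2 + 2 * (p.1 * (starRingEnd ℂ) q.1).im)

/-- Inverse in the Heisenberg group. -/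
def heisInv (p : ℂ × ℝ) : ℂ × ℝ := (-p.1, -p.2)

/-- The Heisenberg norm `|(ζ,v)| = ‖ |ζ|² - i v ‖ ^ (1/2)`. -/
noncomputable def heisNorm (p : ℂ × ℝ) : ℝ :=
  Real.sqrt (‖((‖p.1‖ : ℝ) ^ 2 : ℂ) - p.2 * Complex.I‖)

/-- The Cygan metric `ν(p,q) = |p⁻¹ ∗ q|`. -/
noncomputable def cygan (p q : ℂ × ℝ) : ℝ := heisNorm (heisMul (heisInv p) q)

lemma heisNorm_nonneg (p : ℂ × ℝ) : 0 ≤ heisNorm p := Real.sqrt_nonneg _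

lemma sq_abs_le (p : ℂ × ℝ) :
    (‖p.1‖) ^ 2 ≤ ‖((‖p.1‖ : ℝ) ^ 2 : ℂ) - p.2 * Complex.I‖ := by
  have h := Complex.abs_re_le_norm (((‖p.1‖ : ℝ) ^ 2 : ℂ) - p.2 * Complex.I)
  have hre : (((‖p.1‖ : ℝ) ^ 2 : ℂ) - p.2 * Complex.I).re = (‖p.1‖) ^ 2 := by
    rw [Complex.sub_re, Complex.mul_re, ← Complex.ofReal_pow, Complex.ofReal_re]
    simp
  rw [hre] at h
  calc (‖p.1‖) ^ 2 ≤ |(‖p.1‖) ^ 2| := le_abs_self _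
  _ ≤ _ := h

lemma abs_le_heisNorm (p : ℂ × ℝ) : ‖p.1‖ ≤ heisNorm p := by
  have h := Real.sqrt_le_sqrt (sq_abs_le p)
  rwa [Real.sqrt_sq (norm_nonneg _)] at h

lemma heisNorm_mul_le (p q : ℂ × ℝ) : heisNorm (heisMul p q) ≤ heisNorm p + heisNorm q := by
  set A : ℂ := ((‖p.1‖ : ℝ) ^ 2 : ℂ) - p.2 * Complex.I with hA
  set B : ℂ := ((‖q.1‖ : ℝ) ^ 2 : ℂ) - q.2 * Complex.I with hB
  have hkey : ((‖p.1 + q.1‖ : ℝ) ^ 2 : ℂ) -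
      ((p.2 + q.2 + 2 * (p.1 * (starRingEnd ℂ) q.1).im : ℝ) : ℂ) * Complex.I
      = A + B + 2 * ((starRingEnd ℂ) p.1 * q.1) := by
    apply Complex.ext <;>
      simp [hA, hB, ← Complex.ofReal_pow, Complex.sq_norm, Complex.normSq_apply, Complex.mul_re, Complex.mul_im] <;>
      ring
  have habs : ‖A + B + 2 * ((starRingEnd ℂ) p.1 * q.1)‖ ≤
      (heisNorm p + heisNorm q) ^ 2 := by
    have h1 : ‖A + B + 2 * ((starRingEnd ℂ) p.1 * q.1)‖ ≤
        ‖A‖ + ‖B‖ + 2 * (‖p.1‖ * ‖q.1‖) := by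
      calc ‖A + B + 2 * ((starRingEnd ℂ) p.1 * q.1)‖
          ≤ ‖A + B‖ + ‖2 * ((starRingEnd ℂ) p.1 * q.1)‖ :=
            norm_add_le _ _
        _ ≤ ‖A‖ + ‖B‖ + 2 * (‖p.1‖ * ‖q.1‖) := by
            have : ‖2 * ((starRingEnd ℂ) p.1 * q.1)‖ =
                2 * (‖p.1‖ * ‖q.1‖) := by
              simp [map_mul, Complex.norm_conj]
            rw [this]
            exact add_le_add_left (norm_add_le A B) _
    have hAe : ‖A‖ = heisNorm p ^ 2 := by
      rw [heisNorm, Real.sq_sqrt (norm_nonneg _)]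
    have hBe : ‖B‖ = heisNorm q ^ 2 := by
      rw [heisNorm, Real.sq_sqrt (norm_nonneg _)]
    have hp := abs_le_heisNorm p
    have hq := abs_le_heisNorm q
    have hpq : ‖p.1‖ * ‖q.1‖ ≤ heisNorm p * heisNorm q :=
      mul_le_mul hp hq (norm_nonneg _) (heisNorm_nonneg p)
    nlinarith [h1]
  have : heisNorm (heisMul p q) = Real.sqrt (‖A + B + 2 * ((starRingEnd ℂ) p.1 * q.1)‖) := by
    rw [heisNorm, heisMul]
    congr 1
    rw [← hkey]
  rw [this]
  calc Real.sqrt (‖A + B + 2 * ((starRingEnd ℂ) p.1 * q.1)‖)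
      ≤ Real.sqrt ((heisNorm p + heisNorm q) ^ 2) := Real.sqrt_le_sqrt habs
    _ = heisNorm p + heisNorm q := Real.sqrt_sq (add_nonneg (heisNorm_nonneg p) (heisNorm_nonneg q))

lemma heisMul_assoc_key (p q r : ℂ × ℝ) :
    heisMul (heisMul (heisInv p) q) (heisMul (heisInv q) r) = heisMul (heisInv p) r := by
  simp only [heisMul, heisInv, Prod.mk.injEq]
  refine ⟨by ring, ?_⟩
  simp only [Complex.mul_im, Complex.mul_re, Complex.add_re, Complex.add_im, Complex.neg_re,
    Complex.neg_im, Complex.conj_re, Complex.conj_im]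
  ring

lemma heisNorm_symm_eq (p q : ℂ × ℝ) :
    heisNorm (heisMul (heisInv p) q) = heisNorm (heisMul (heisInv q) p) := by
  simp only [heisNorm, heisMul, heisInv]
  have h1 : ‖-p.1 + q.1‖ = ‖-q.1 + p.1‖ := by
    rw [show (-q.1 + p.1 : ℂ) = -(-p.1 + q.1) by ring, norm_neg]
  rw [h1]
  congr 1
  rw [show ((‖-q.1 + p.1‖ : ℝ) ^ 2 : ℂ) -
      ((-q.2 + p.2 + 2 * (-q.1 * (starRingEnd ℂ) p.1).im : ℝ) : ℂ) * Complex.I =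
      (starRingEnd ℂ) (((‖-q.1 + p.1‖ : ℝ) ^ 2 : ℂ) -
      ((-p.2 + q.2 + 2 * (-p.1 * (starRingEnd ℂ) q.1).im : ℝ) : ℂ) * Complex.I) from ?_,
    Complex.norm_conj]
  apply Complex.ext <;>
    simp [Complex.mul_im, Complex.mul_re, Complex.conj_re, Complex.conj_im] <;> ring

/-- The Cygan metric is a metric on the Heisenberg group: symmetric, nonnegative,
vanishing exactly on the diagonal, and satisfying the triangle inequality. -/
theorem stmt2 :
    (∀ p q : ℂ × ℝ, cygan p q = cygan q p) ∧
    (∀ p q : ℂ × ℝ, 0 ≤ cygan p q) ∧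
    (∀ p q : ℂ × ℝ, cygan p q = 0 ↔ p = q) ∧
    (∀ p q r : ℂ × ℝ, cygan p r ≤ cygan p q + cygan q r) := by
  refine ⟨fun p q => heisNorm_symm_eq p q, fun p q => heisNorm_nonneg _, fun p q => ?_,
    fun p q r => ?_⟩
  · constructor
    · intro h
      rw [cygan, heisNorm, Real.sqrt_eq_zero (norm_nonneg _), norm_eq_zero] at h
      have hre := congrArg Complex.re h
      have him := congrArg Complex.im h
      simp [heisMul, heisInv, ← Complex.ofReal_pow] at hre him
      have h1 : q.1 = p.1 := by linear_combination hre
      have h2 : q.2 = p.2 := by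
        rw [h1] at him
        linear_combination -him
      exact Prod.ext h1.symm h2.symm
    · rintro rfl
      rw [cygan, heisNorm]
      have : heisMul (heisInv p) p = (0, 0) := by
        simp [heisMul, heisInv, Complex.mul_im, Complex.conj_re, Complex.conj_im]
        ring
      rw [this]
      simp
  · rw [cygan, cygan, cygan, ← heisMul_assoc_key p q r]
    exact heisNorm_mul_le _ _
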